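/- Let $\{a_n\}$, $\{b_n\}$ be nonzero complex sequences with $r := \sup_n |b_n/a_{n+1}| < 1$, and let $\lambda \ne 0$. Suppose $f = \sum_{n\ge 0} \lambda_n f_n \in \mathcal{H}_{a,b}$ is a nonzero vector and $p \ge 1$ satisfy $(\lambda B)^p f = f$. Writing $f(z) = \sum_n A_n z^n$ with $A_0 = \lambda_0 a_0$ and $A_n = \lambda_{n-1} b_{n-1} + \lambda_n a_n$, if $A_0 \ne 0$ then $\sum_{k=1}^{\infty} \left|\frac{1}{\lambda^{kp} a_{kp}}\right|^2 < \infty$. (In fact, nontrivial periodicity implies $\sum_{n=0}^\infty |\lambda^n a_n|^{-2} < \infty$.) -/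

import Mathlib

/-- Coefficient-level consequence of a nontrivial periodic vector of `λB` on `H_{a,b}`:
if `f = ∑ λₙ fₙ` satisfies `(λB)^p f = f` (encoded by the Taylor-coefficient identities
`A_j = λ^{kp} A_{kp+j}`) and `A_0 ≠ 0`, then `∑_{k≥1} |λ^{kp} a_{kp}|^{-2} < ∞`. -/
theorem stmt12 (a b : ℕ → ℂ) (ha : ∀ n, a n ≠ 0) (hb : ∀ n, b n ≠ 0)
    (r : ℝ) (hr : r < 1) (hrs : ∀ n : ℕ, ‖b n / a (n + 1)‖ ≤ r)
    (lam : ℂ) (hlam : lam ≠ 0)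
    (lamseq : ℕ → ℂ) (hsq : Summable fun n : ℕ => ‖lamseq n‖ ^ 2)
    (A : ℕ → ℂ) (hA0 : A 0 = lamseq 0 * a 0)
    (hAn : ∀ n : ℕ, A (n + 1) = lamseq n * b n + lamseq (n + 1) * a (n + 1))
    (p : ℕ) (hp : 1 ≤ p)
    (hper : ∀ k : ℕ, 1 ≤ k → ∀ j : ℕ, j < p → A j = lam ^ (k * p) * A (k * p + j))
    (hA0ne : A 0 ≠ 0) :
    Summable fun k : ℕ => ‖1 / (lam ^ ((k + 1) * p) * a ((k + 1) * p))‖ ^ 2 := by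
  have hr0 : 0 ≤ r := le_trans (norm_nonneg _) (hrs 0)
  have hA0pos : 0 < ‖A 0‖ := norm_pos_iff.mpr hA0ne
  set C : ℝ := 2 / ‖A 0‖ ^ 2 with hC
  -- the key pointwise bound
  have hkey : ∀ k : ℕ, ‖1 / (lam ^ ((k + 1) * p) * a ((k + 1) * p))‖ ^ 2 ≤
      C * (r ^ 2 * ‖lamseq ((k + 1) * p - 1)‖ ^ 2 + ‖lamseq ((k + 1) * p)‖ ^ 2) := by
    intro k
    set N := (k + 1) * p with hNdef
    have hN1 : 1 ≤ N := by
      have : 1 * 1 ≤ (k + 1) * p := Nat.mul_le_mul (by omega) hp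
      simpa [hNdef] using this
    obtain ⟨n, hn⟩ : ∃ n, N = n + 1 := ⟨N - 1, by omega⟩
    have hnval : N - 1 = n := by omega
    have hlamN : lam ^ N ≠ 0 := pow_ne_zero _ hlam
    have haN : a N ≠ 0 := ha N
    have hAN : A N = A 0 / lam ^ N := by
      have h := hper (k + 1) (by omega) 0 (by omega)
      rw [Nat.add_zero] at h
      rw [eq_div_iff hlamN]
      rw [h]; exact mul_comm _ _
    have key : (1 : ℂ) / (lam ^ N * a N) = A N / a N / A 0 := by
      rw [hAN]
      field_simp
    have hstep : A N / a N = lamseq n * (b n / a N) + lamseq (n + 1) := by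
      rw [hn, hAn n]
      have h1 : a (n + 1) ≠ 0 := ha _
      field_simp
    have hnorm : ‖A N / a N‖ ≤ ‖lamseq n‖ * r + ‖lamseq (n + 1)‖ := by
      rw [hstep]
      refine le_trans (norm_add_le _ _) ?_
      have h2 : ‖lamseq n * (b n / a N)‖ ≤ ‖lamseq n‖ * r := by
        rw [norm_mul]
        have := hrs n
        rw [← hn] at this
        exact mul_le_mul_of_nonneg_left this (norm_nonneg _)
      linarith
    have hfin : ‖(1 : ℂ) / (lam ^ N * a N)‖ ^ 2 ≤
        C * (r ^ 2 * ‖lamseq n‖ ^ 2 + ‖lamseq (n + 1)‖ ^ 2) := by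
      rw [key, norm_div]
      rw [div_pow, hC, div_mul_eq_mul_div]
      rw [div_le_div_iff₀ (by positivity) (by positivity)]
      have hx : 0 ≤ ‖lamseq n‖ := norm_nonneg _
      have hy : 0 ≤ ‖lamseq (n + 1)‖ := norm_nonneg _
      have h0 : 0 ≤ ‖A N / a N‖ := norm_nonneg _
      nlinarith [sq_nonneg (‖lamseq n‖ * r - ‖lamseq (n + 1)‖), sq_nonneg (‖A 0‖),
        mul_le_mul hnorm hnorm h0 (by positivity : (0:ℝ) ≤ ‖lamseq n‖ * r + ‖lamseq (n+1)‖)]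
    rw [hn] at hfin
    rw [hnval, hn]
    exact hfin
  -- summability of the bounding sequence
  have hmono : ∀ (c : ℕ) , StrictMono (fun k : ℕ => (k + 1) * p - c) ∨ True := fun _ => Or.inr trivial
  have hi1 : Function.Injective (fun k : ℕ => (k + 1) * p - 1) := by
    intro x y h
    simp only at h
    rcases lt_trichotomy x y with h' | h' | h'
    · exfalso
      have h2 : (x + 1) * p < (y + 1) * p := (Nat.mul_lt_mul_right (show 0 < p by omega)).mpr (by omega)
      have h1 : 1 ≤ (x + 1) * p := Nat.one_le_iff_ne_zero.mpr (Nat.mul_ne_zero (by omega) (by omega))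
      omega
    · exact h'
    · exfalso
      have h2 : (y + 1) * p < (x + 1) * p := (Nat.mul_lt_mul_right (show 0 < p by omega)).mpr (by omega)
      have h1 : 1 ≤ (y + 1) * p := Nat.one_le_iff_ne_zero.mpr (Nat.mul_ne_zero (by omega) (by omega))
      omega
  have hi2 : Function.Injective (fun k : ℕ => (k + 1) * p) := by
    intro x y h
    simp only at h
    rcases lt_trichotomy x y with h' | h' | h'
    · exact absurd h (Nat.ne_of_lt (show (x+1)*p < (y+1)*p from (Nat.mul_lt_mul_right (show 0 < p by omega)).mpr (by omega)))
    · exact h'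
    · exact absurd h.symm (Nat.ne_of_lt (show (y+1)*p < (x+1)*p from (Nat.mul_lt_mul_right (show 0 < p by omega)).mpr (by omega)))
  have hs1 : Summable fun k : ℕ => ‖lamseq ((k + 1) * p - 1)‖ ^ 2 :=
    hsq.comp_injective hi1
  have hs2 : Summable fun k : ℕ => ‖lamseq ((k + 1) * p)‖ ^ 2 :=
    hsq.comp_injective hi2
  have hsum : Summable fun k : ℕ =>
      C * (r ^ 2 * ‖lamseq ((k + 1) * p - 1)‖ ^ 2 + ‖lamseq ((k + 1) * p)‖ ^ 2) :=
    ((hs1.mul_left (r ^ 2)).add hs2).mul_left C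
  exact Summable.of_nonneg_of_le (fun k => by positivity) hkey hsum
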